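/- Let G be a core graph and let C be a 5-hole in G. Then every two consecutive (adjacent) vertices of C have at most one common neighbor in G. -/

import Mathlib

open SimpleGraph

namespace TP

/-- A set of vertices is independent: no two of its vertices are adjacent. -/
def IsIndep {V : Type*} (G : SimpleGraph V) (S : Set V) : Prop :=
  S.Pairwise fun u v => ¬ G.Adj u v

/-- The finite vertex set `s` induces a cycle of length `n` in `G`. -/
def IsInducedCycle {V : Type*} (G : SimpleGraph V) (n : ℕ) (s : Finset V) : Prop :=
  3 ≤ n ∧ s.card = n ∧ Nonempty (G.induce (s : Set V) ≃g SimpleGraph.cycleGraph n)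

/-- The polytope `P(G)` given by nonnegativity, edge and odd-cycle inequalities. -/
def tPolytope {V : Type*} [Fintype V] (G : SimpleGraph V) : Set (V → ℝ) :=
  {x | (∀ v, 0 ≤ x v ∧ x v ≤ 1) ∧
    (∀ ⦃u v⦄, G.Adj u v → x u + x v ≤ 1) ∧
    (∀ (n : ℕ) (s : Finset V), Odd n → IsInducedCycle G n s →
      ∑ v ∈ s, x v ≤ ((n : ℝ) - 1) / 2)}

/-- The independent set polytope: the convex hull of characteristic vectors of
independent sets. -/
def stabPolytope {V : Type*} [Fintype V] (G : SimpleGraph V) : Set (V → ℝ) :=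
  convexHull ℝ {x | ∃ S : Set V, IsIndep G S ∧ x = S.indicator fun _ => (1 : ℝ)}

/-- A graph is t-perfect if `P(G)` equals its independent set polytope. -/
def TPerfect {V : Type*} [Fintype V] (G : SimpleGraph V) : Prop :=
  tPolytope G = stabPolytope G

/-- The graph obtained from `G` by a t-contraction at `v` : the closed neighbourhood
of `v` is replaced by a single new vertex (`none`), adjacent to every vertex that had
a neighbour in the closed neighbourhood of `v`. -/
def tContract {V : Type*} (G : SimpleGraph V) (v : V) :
    SimpleGraph (Option {w : V // w ≠ v ∧ ¬ G.Adj v w}) :=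
  SimpleGraph.fromRel fun a b =>
    match a, b with
    | some a, some b => G.Adj a.1 b.1
    | some a, none => ∃ x, (x = v ∨ G.Adj v x) ∧ G.Adj a.1 x
    | none, _ => False

/-- A bundled finite simple graph. -/
structure FinGraph : Type 1 where
  V : Type
  [fintype : Fintype V]
  graph : SimpleGraph V

attribute [instance] FinGraph.fintype

def FinGraph.of {V : Type} [Fintype V] (G : SimpleGraph V) : FinGraph :=
  FinGraph.mk V G

/-- `B` is obtained from `A` by deleting one vertex (up to isomorphism). -/
def DeleteStep (A B : FinGraph) : Prop :=
  ∃ v : A.V, Nonempty (B.graph ≃g A.graph.induce {w | w ≠ v})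

/-- `B` is obtained from `A` by a t-contraction at a vertex whose neighbourhood is
independent (up to isomorphism). -/
def ContractStep (A B : FinGraph) : Prop :=
  ∃ v : A.V, IsIndep A.graph (A.graph.neighborSet v) ∧
    Nonempty (B.graph ≃g tContract A.graph v)

/-- One step: a vertex deletion or a t-contraction. -/
def Step (A B : FinGraph) : Prop := DeleteStep A B ∨ ContractStep A B

/-- `TMinor B A` : `B` is a t-minor of `A`, i.e. obtained from `A` by a sequence of
vertex deletions and t-contractions. -/
def TMinor (B A : FinGraph) : Prop := Relation.ReflTransGen Step A B

/-- `B` is a proper t-minor of `A` : a t-minor with fewer vertices. -/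
def ProperTMinor (B A : FinGraph) : Prop :=
  TMinor B A ∧ Fintype.card B.V < Fintype.card A.V

/-- A graph is minimally t-imperfect if it is not t-perfect but every proper t-minor
of it is t-perfect. -/
def MinimallyTImperfect {V : Type} [Fintype V] (G : SimpleGraph V) : Prop :=
  ¬ TPerfect G ∧ ∀ B : FinGraph, ProperTMinor B (FinGraph.of G) → TPerfect B.graph

/-- A core graph: every proper t-minor of `G` and every proper t-minor of its
complement is t-perfect. -/
def IsCore {V : Type} [Fintype V] (G : SimpleGraph V) : Prop :=
  (∀ B : FinGraph, ProperTMinor B (FinGraph.of G) → TPerfect B.graph) ∧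
  (∀ B : FinGraph, ProperTMinor B (FinGraph.of Gᶜ) → TPerfect B.graph)

/-- A partition of `V \ {v}` into `count` sets of size `size`, all satisfying `P`. -/
def CoverOff {V : Type*} (v : V) (count size : ℕ) (P : Finset V → Prop) : Prop :=
  ∃ f : Fin count → Finset V,
    (∀ i, P (f i) ∧ (f i).card = size) ∧
    (∀ i j, i ≠ j → Disjoint (f i) (f j)) ∧
    (∀ i, v ∉ f i) ∧
    (∀ w, w ≠ v → ∃ i, w ∈ f i)

/-- `(p,q)`-partitionable graphs. -/
def PQPartitionable {V : Type*} [Fintype V] (G : SimpleGraph V) (p q : ℕ) : Prop :=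
  2 ≤ p ∧ 2 ≤ q ∧ Fintype.card V = p * q + 1 ∧
  ∀ v : V,
    CoverOff v q p (fun S => IsIndep G (S : Set V)) ∧
    CoverOff v p q (fun S => G.IsClique (S : Set V))

/-- `G` has an odd hole: an induced odd cycle of length at least five. -/
def HasOddHole {V : Type*} (G : SimpleGraph V) : Prop :=
  ∃ (n : ℕ) (s : Finset V), Odd n ∧ 5 ≤ n ∧ IsInducedCycle G n s

/-- A graph is perfect iff neither it nor its complement has an odd hole. -/
def GPerfect {V : Type*} (G : SimpleGraph V) : Prop :=
  ¬ HasOddHole G ∧ ¬ HasOddHole Gᶜ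

/-- Every vertex has degree at least three and at most five. -/
def DegreeBounded {V : Type*} (G : SimpleGraph V) : Prop :=
  ∀ v, 3 ≤ (G.neighborSet v).ncard ∧ (G.neighborSet v).ncard ≤ 5

/-- The `n`-wheel: an `n`-cycle plus a vertex (`none`) adjacent to every cycle vertex. -/
def wheel (n : ℕ) : SimpleGraph (Option (Fin n)) :=
  SimpleGraph.fromRel fun a b =>
    match a, b with
    | some i, some j => (SimpleGraph.cycleGraph n).Adj i j
    | none, some _ => True
    | _, none => False

/-- Vertex type of the standard 9-vertex labeling: `inl i` is `v_{i+1}`,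
`inr j` is `u_{j+1}`. -/
abbrev V9 := Fin 5 ⊕ Fin 4

/-- Vertex type of the standard 10-vertex labeling. -/
abbrev V10 := Fin 5 ⊕ Fin 5

/-- The standard 9-vertex labeling: `v1 … v5` form a 5-hole; the neighbours of `u_i`
among the `v`'s are `v_{i+2}` and `v_{i+3}` together possibly with `v_i`. -/
def Std9 (G : SimpleGraph V9) : Prop :=
  (∀ i j : Fin 5, G.Adj (.inl i) (.inl j) ↔ (j = i + 1 ∨ i = j + 1)) ∧
  (∀ (i : Fin 4) (k : Fin 5), G.Adj (.inr i) (.inl k) →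
    k = i.castSucc + 2 ∨ k = i.castSucc + 3 ∨ k = i.castSucc) ∧
  (∀ i : Fin 4, G.Adj (.inr i) (.inl (i.castSucc + 2)) ∧ G.Adj (.inr i) (.inl (i.castSucc + 3)))

/-- The standard 10-vertex labeling. -/
def Std10 (G : SimpleGraph V10) : Prop :=
  (∀ i j : Fin 5, G.Adj (.inl i) (.inl j) ↔ (j = i + 1 ∨ i = j + 1)) ∧
  (∀ (i k : Fin 5), G.Adj (.inr i) (.inl k) → k = i + 2 ∨ k = i + 3 ∨ k = i) ∧
  (∀ i : Fin 5, G.Adj (.inr i) (.inl (i + 2)) ∧ G.Adj (.inr i) (.inl (i + 3)))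

/-- The 9-vertex graph of the standard labeling with prescribed `U`-edges and
prescribed extra edges `u_i v_i`. -/
def graph9 (uEdges : List (Fin 4 × Fin 4)) (extra : List (Fin 4)) : SimpleGraph V9 :=
  SimpleGraph.fromRel fun a b =>
    match a, b with
    | .inl i, .inl j => j = i + 1
    | .inr i, .inl k => k = i.castSucc + 2 ∨ k = i.castSucc + 3 ∨ (i ∈ extra ∧ k = i.castSucc)
    | .inl _, .inr _ => False
    | .inr i, .inr j => (i, j) ∈ uEdges

/-- The 10-vertex graph of the standard labeling with prescribed `U`-edges and
prescribed extra edges `u_i v_i`. -/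
def graph10 (uEdges : List (Fin 5 × Fin 5)) (extra : List (Fin 5)) : SimpleGraph V10 :=
  SimpleGraph.fromRel fun a b =>
    match a, b with
    | .inl i, .inl j => j = i + 1
    | .inr i, .inl k => k = i + 2 ∨ k = i + 3 ∨ (i ∈ extra ∧ k = i)
    | .inl _, .inr _ => False
    | .inr i, .inr j => (i, j) ∈ uEdges

/-- The graph `(12°435°1)`. -/
def G12435 : SimpleGraph V10 :=
  graph10 [(0,1),(1,3),(3,2),(2,4),(4,0)] [1,4]

/-- The graph `(1°2°435°1°)`. -/
def G12435' : SimpleGraph V10 :=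
  graph10 [(0,1),(1,3),(3,2),(2,4),(4,0)] [0,1,4]



section Aux

/-- Separating-functional criterion for t-imperfection. All data scaled by 3:
the fractional point is `v ↦ q v / 3`. -/
lemma notTPerfect {W : Type*} [Fintype W] (K : SimpleGraph W) (q c : W → ℕ) (r : ℕ)
    (hcard : Fintype.card W ≤ 6)
    (hq : ∀ v, 1 ≤ q v ∧ q v ≤ 3)
    (hedge : ∀ u v, K.Adj u v → q u + q v ≤ 3)
    (htri : ∀ a b d, a ≠ b → a ≠ d → b ≠ d → K.Adj a b → K.Adj a d → K.Adj b d →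
      q a + q b + q d ≤ 3)
    (h5 : ∀ s : Finset W, s.card = 5 → ∑ v ∈ s, q v ≤ 6)
    (hstab : ∀ s : Finset W, (∀ u ∈ s, ∀ v ∈ s, u ≠ v → ¬ K.Adj u v) → ∑ v ∈ s, c v ≤ r)
    (hviol : 3 * r < ∑ v, c v * q v) : ¬ TPerfect K := by
  classical
  intro htp
  set p : W → ℝ := fun v => (q v : ℝ) / 3 with hp
  have hmem : p ∈ tPolytope K := by
    refine ⟨fun v => ⟨by positivity, ?_⟩, fun u v huv => ?_, ?_⟩
    · have := (hq v).2
      rw [hp]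
      have : (q v : ℝ) ≤ 3 := by exact_mod_cast this
      linarith
    · have := hedge u v huv
      have : ((q u : ℝ) + q v) ≤ 3 := by exact_mod_cast this
      simp only [hp]
      linarith
    · rintro n s hodd ⟨hn3, hcards, ⟨e⟩⟩
      have hncard : n ≤ 6 := by
        calc n = s.card := hcards.symm
        _ ≤ Fintype.card W := s.card_le_univ
        _ ≤ 6 := hcard
      obtain ⟨m, hm⟩ := hodd
      have hsum : ∑ v ∈ s, p v = (∑ v ∈ s, (q v : ℕ) : ℕ) / 3 := by
        rw [← Finset.sum_div]
        push_cast
        rfl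
      have h35 : n = 3 ∨ n = 5 := by omega
      rcases h35 with h3 | h5'
      · subst h3
        have hadj : ∀ u ∈ s, ∀ v ∈ s, u ≠ v → K.Adj u v := by
          intro u hu v hv huvne
          have hne : e ⟨u, by simpa using hu⟩ ≠ e ⟨v, by simpa using hv⟩ := by
            intro h
            exact huvne (congrArg Subtype.val (e.injective h))
          have : (cycleGraph 3).Adj (e ⟨u, by simpa using hu⟩) (e ⟨v, by simpa using hv⟩) := by
            revert hne
            generalize e ⟨u, _⟩ = i
            generalize e ⟨v, _⟩ = j
            revert i j
            decide
          exact e.map_rel_iff.mp this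
        obtain ⟨a, b, d, hab, had, hbd, rfl⟩ := Finset.card_eq_three.mp hcards
        have hq3 : q a + q b + q d ≤ 3 :=
          htri a b d hab had hbd (hadj _ (by simp) _ (by simp) hab)
            (hadj _ (by simp) _ (by simp) had) (hadj _ (by simp) _ (by simp) hbd)
        have hsq : (∑ v ∈ ({a, b, d} : Finset W), q v) ≤ 3 := by
          rw [Finset.sum_insert (by simp [hab, had]), Finset.sum_insert (by simp [hbd]),
            Finset.sum_singleton]
          omega
        rw [hsum]
        have hsq' : ((∑ v ∈ ({a, b, d} : Finset W), q v : ℕ) : ℝ) ≤ 3 := by exact_mod_cast hsq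
        have h3r : ((3 : ℕ) : ℝ) = 3 := by norm_num
        rw [h3r]
        linarith
      · subst h5'
        rw [hsum]
        have := h5 s hcards
        have h6 : ((∑ v ∈ s, q v : ℕ) : ℝ) ≤ 6 := by exact_mod_cast this
        have : ((5 : ℕ) : ℝ) = 5 := by norm_num
        rw [this]
        linarith
  rw [htp] at hmem
  have hconv : Convex ℝ {x : W → ℝ | ∑ v, (c v : ℝ) * x v ≤ r} := by
    refine convex_halfSpace_le ⟨fun x y => ?_, fun t x => ?_⟩ _
    · simp [mul_add, Finset.sum_add_distrib]
    · simp only [Pi.smul_apply, smul_eq_mul, Finset.mul_sum]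
      exact Finset.sum_congr rfl fun v _ => by ring
  have hsub : {x | ∃ S : Set W, IsIndep K S ∧ x = S.indicator fun _ => (1 : ℝ)} ⊆
      {x : W → ℝ | ∑ v, (c v : ℝ) * x v ≤ r} := by
    rintro x ⟨S, hS, rfl⟩
    simp only [Set.mem_setOf_eq]
    have : ∑ v, (c v : ℝ) * S.indicator (fun _ => (1 : ℝ)) v
        = ∑ v ∈ S.toFinset, (c v : ℝ) := by
      rw [← Set.filter_mem_univ_eq_toFinset, Finset.sum_filter]
      refine Finset.sum_congr rfl fun v _ => ?_
      by_cases hv : v ∈ S <;> simp [Set.indicator, hv]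
    rw [this]
    have hb : ∑ v ∈ S.toFinset, c v ≤ r := by
      refine hstab _ fun u hu v hv huv => hS (by simpa using hu) (by simpa using hv) huv
    exact_mod_cast hb
  have hle := convexHull_min hsub hconv hmem
  simp only [Set.mem_setOf_eq] at hle
  have heq : (∑ v, (c v : ℝ) * p v) * 3 = ((∑ v, c v * q v : ℕ) : ℝ) := by
    push_cast
    rw [Finset.sum_mul]
    exact Finset.sum_congr rfl fun v _ => by simp only [hp]; ring
  have hv' : ((3 * r : ℕ) : ℝ) < ((∑ v, c v * q v : ℕ) : ℝ) := by exact_mod_cast hviol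
  rw [← heq] at hv'
  push_cast at hv'
  linarith

/-- A graph isomorphic to an induced subgraph on a proper subset is a t-minor. -/
lemma tminor_of_induce : ∀ (n : ℕ) (V : Type) [Fintype V] (G : SimpleGraph V)
    (S : Set V), Fintype.card V ≤ n → S ≠ Set.univ →
    ∀ (H : FinGraph), (H.graph ≃g G.induce S) → TMinor H (FinGraph.of G) := by
  intro n
  induction n with
  | zero =>
    intro V _ G S hcard hne H e
    have hempty : IsEmpty V := Fintype.card_eq_zero_iff.mp (Nat.le_zero.mp hcard)
    exact absurd (by ext x; exact isEmptyElim x : S = Set.univ) hne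
  | succ n ih =>
    intro V _ G S hcard hne H e
    classical
    have : ∃ v, v ∉ S := by
      by_contra h
      push_neg at h
      exact hne (Set.eq_univ_of_forall h)
    obtain ⟨v, hv⟩ := this
    by_cases hS : S = {w | w ≠ v}
    · rw [hS] at e
      exact Relation.ReflTransGen.single (Or.inl ⟨v, ⟨e⟩⟩)
    · set V' := {w : V // w ≠ v} with hV'
      set G' : SimpleGraph V' := G.induce {w | w ≠ v} with hG'
      have hstep : Step (FinGraph.of G) (FinGraph.of G') := Or.inl ⟨v, ⟨⟨Equiv.refl _, Iff.rfl⟩⟩⟩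
      set S' : Set V' := {w : V' | w.1 ∈ S} with hS'
      have hvS : ∀ w : V, w ∈ S → w ≠ v := fun w hw hwv => hv (hwv ▸ hw)
      have e2 : G'.induce S' ≃g G.induce S :=
        ⟨{ toFun := fun x => ⟨x.1.1, x.2⟩
           invFun := fun y => ⟨⟨y.1, hvS y.1 y.2⟩, y.2⟩
           left_inv := fun x => rfl
           right_inv := fun y => rfl }, by intro a b; exact Iff.rfl⟩
      have hcard' : Fintype.card V' ≤ n := by
        have h1 : Fintype.card V' < Fintype.card V :=
          Fintype.card_subtype_lt (x := v) (by simp)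
        omega
      have hne' : S' ≠ Set.univ := by
        intro h
        apply hS
        ext w
        constructor
        · intro hw; exact hvS w hw
        · intro hw
          have : (⟨w, hw⟩ : V') ∈ S' := h ▸ Set.mem_univ _
          exact this
      exact Relation.ReflTransGen.head hstep
        (ih V' G' S' hcard' hne' H (e.trans e2.symm))

/-- If `G` embeds a forbidden (t-imperfect) pattern on fewer vertices as an induced
subgraph, then not all proper t-minors of `G` are t-perfect. -/
lemma key {V : Type} [Fintype V] (G : SimpleGraph V)
    (htp : ∀ B : FinGraph, ProperTMinor B (FinGraph.of G) → TPerfect B.graph)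
    {k : ℕ} (P : SimpleGraph (Fin k))
    (w : Fin k → V) (hinj : Function.Injective w)
    (hadj : ∀ i j, i ≠ j → (G.Adj (w i) (w j) ↔ P.Adj i j))
    (hkV : k < Fintype.card V) (hP : ¬ TPerfect P) : False := by
  classical
  set S : Set V := Set.range w with hSdef
  have hne : S ≠ Set.univ := by
    intro h
    have hsurj : Function.Surjective w := fun v => (h ▸ Set.mem_univ v : v ∈ S)
    have := Fintype.card_le_of_surjective w hsurj
    simp only [Fintype.card_fin] at this
    omega
  have e : (FinGraph.of P).graph ≃g G.induce S := by
    refine ⟨Equiv.ofInjective w hinj, ?_⟩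
    intro i j
    by_cases h : i = j
    · subst h
      constructor
      · intro hh; exact absurd hh (SimpleGraph.irrefl _)
      · intro hh; exact absurd hh (SimpleGraph.irrefl _)
    · exact (Iff.rfl : (G.induce S).Adj (Equiv.ofInjective w hinj i)
        (Equiv.ofInjective w hinj j) ↔ G.Adj (w i) (w j)).trans (hadj i j h)
  have hmin : TMinor (FinGraph.of P) (FinGraph.of G) :=
    tminor_of_induce (Fintype.card V) V G S le_rfl hne _ e
  have := htp (FinGraph.of P) ⟨hmin, by
    show Fintype.card (Fin k) < Fintype.card V
    simpa using hkV⟩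
  exact hP this

/-- Small concrete pattern graphs. -/
def mkP (n : ℕ) (l : List (Fin n × Fin n)) : SimpleGraph (Fin n) :=
  SimpleGraph.fromRel fun a b => (a, b) ∈ l

instance (n : ℕ) (l : List (Fin n × Fin n)) : DecidableRel (mkP n l).Adj := fun a b =>
  decidable_of_iff _ (SimpleGraph.fromRel_adj _ a b).symm

abbrev patK4 := mkP 4 [(0,1),(0,2),(0,3),(1,2),(1,3),(2,3)]
abbrev patW5 := mkP 6 [(0,1),(1,2),(2,3),(3,4),(4,0),(5,0),(5,1),(5,2),(5,3),(5,4)]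
abbrev patA2 := mkP 6 [(0,1),(1,2),(2,3),(3,4),(4,0),(5,0),(5,1),(5,2)]
abbrev patA23 := mkP 6 [(0,1),(1,2),(2,3),(3,4),(4,0),(5,0),(5,1),(5,2),(5,3)]
abbrev patA24 := mkP 6 [(0,1),(1,2),(2,3),(3,4),(4,0),(5,0),(5,1),(5,2),(5,4)]

lemma patK4_not : ¬ TPerfect patK4 :=
  notTPerfect _ (fun _ => 1) (fun _ => 1) 1 (by decide) (by decide) (by decide) (by decide)
    (by decide) (by decide) (by decide)

lemma patW5_not : ¬ TPerfect patW5 :=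
  notTPerfect _ (fun _ => 1) (fun v => if v = 5 then 2 else 1) 2 (by decide) (by decide)
    (by decide) (by decide) (by decide) (by decide) (by decide)

lemma patA2_not : ¬ TPerfect patA2 :=
  notTPerfect _ (fun v => if v = 3 then 2 else 1) (fun _ => 1) 2 (by decide) (by decide)
    (by decide) (by decide) (by decide) (by decide) (by decide)

lemma patA23_not : ¬ TPerfect patA23 :=
  notTPerfect _ (fun v => if v = 4 then 2 else 1) (fun _ => 1) 2 (by decide) (by decide)
    (by decide) (by decide) (by decide) (by decide) (by decide)

lemma patA24_not : ¬ TPerfect patA24 :=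
  notTPerfect _ (fun v => if v = 3 then 2 else 1) (fun _ => 1) 2 (by decide) (by decide)
    (by decide) (by decide) (by decide) (by decide) (by decide)

end Aux

set_option maxHeartbeats 1600000

/-- in a core graph, two consecutive vertices of a 5-hole have at most
one common neighbour. -/
theorem stmt6 {V : Type} [Fintype V] (G : SimpleGraph V)
    (hc : IsCore G) (s : Finset V) (hs : IsInducedCycle G 5 s)
    (a b : V) (ha : a ∈ s) (hb : b ∈ s) (hab : G.Adj a b) :
    {w : V | G.Adj a w ∧ G.Adj b w}.ncard ≤ 1 := by
  classical
  by_contra hcon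
  push_neg at hcon
  obtain ⟨x, y, hx, hy, hxy⟩ := (Set.one_lt_ncard_iff (Set.toFinite _)).mp hcon
  simp only [Set.mem_setOf_eq] at hx hy
  obtain ⟨-, hcard5, ⟨e⟩⟩ := hs
  have hvadj : ∀ k l : Fin 5, G.Adj (e.symm k).1 (e.symm l).1 ↔ (cycleGraph 5).Adj k l :=
    fun k l => e.symm.map_rel_iff
  have hvinj : Function.Injective (fun k : Fin 5 => (e.symm k).1) :=
    fun k l h => e.symm.injective (Subtype.ext h)
  obtain ⟨i, hi⟩ : ∃ i : Fin 5, (e.symm i).1 = a :=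
    ⟨e ⟨a, by simpa using ha⟩, by simp⟩
  obtain ⟨j, hj⟩ : ∃ j : Fin 5, (e.symm j).1 = b :=
    ⟨e ⟨b, by simpa using hb⟩, by simp⟩
  have hij : (cycleGraph 5).Adj i j := (hvadj i j).mp (by rw [hi, hj]; exact hab)
  -- rotated/reflected relabeling of the cycle starting with the edge ab
  set p : Fin 5 → V := fun k => (e.symm (i + (j - i) * k)).1 with hpdef
  have hrot : ∀ i j : Fin 5, (cycleGraph 5).Adj i j → ∀ k l : Fin 5,
      ((cycleGraph 5).Adj (i + (j - i) * k) (i + (j - i) * l) ↔ (cycleGraph 5).Adj k l) := by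
    decide
  have hrotinj : ∀ i j : Fin 5, (cycleGraph 5).Adj i j → ∀ k l : Fin 5,
      i + (j - i) * k = i + (j - i) * l → k = l := by decide
  have hpadj : ∀ k l, G.Adj (p k) (p l) ↔ (cycleGraph 5).Adj k l :=
    fun k l => (hvadj _ _).trans (hrot i j hij k l)
  have hpinj : Function.Injective p :=
    fun k l h => hrotinj i j hij k l (hvinj h)
  have hp0 : p 0 = a := by
    have h0 : i + (j - i) * 0 = i := (by decide : ∀ i j : Fin 5, i + (j - i) * 0 = i) i j
    rw [hpdef]; show (e.symm (i + (j - i) * 0)).1 = a; rw [h0]; exact hi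
  have hp1 : p 1 = b := by
    have h1 : i + (j - i) * 1 = j := (by decide : ∀ i j : Fin 5, i + (j - i) * 1 = j) i j
    rw [hpdef]; show (e.symm (i + (j - i) * 1)).1 = b; rw [h1]; exact hj
  -- adjacency facts along the cycle, both orientations
  clear_value p
  clear hvadj hvinj hrot hrotinj hi hj hij hcard5
  have hc01 : G.Adj (p 0) (p 1) := (hpadj 0 1).mpr (by decide)
  have hc12 : G.Adj (p 1) (p 2) := (hpadj 1 2).mpr (by decide)
  have hc23 : G.Adj (p 2) (p 3) := (hpadj 2 3).mpr (by decide)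
  have hc34 : G.Adj (p 3) (p 4) := (hpadj 3 4).mpr (by decide)
  have hc40 : G.Adj (p 4) (p 0) := (hpadj 4 0).mpr (by decide)
  have hc10 := hc01.symm
  have hc21 := hc12.symm
  have hc32 := hc23.symm
  have hc43 := hc34.symm
  have hc04 := hc40.symm
  have hn02 : ¬ G.Adj (p 0) (p 2) := fun h => (by decide : ¬ (cycleGraph 5).Adj 0 2) ((hpadj 0 2).mp h)
  have hn03 : ¬ G.Adj (p 0) (p 3) := fun h => (by decide : ¬ (cycleGraph 5).Adj 0 3) ((hpadj 0 3).mp h)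
  have hn13 : ¬ G.Adj (p 1) (p 3) := fun h => (by decide : ¬ (cycleGraph 5).Adj 1 3) ((hpadj 1 3).mp h)
  have hn14 : ¬ G.Adj (p 1) (p 4) := fun h => (by decide : ¬ (cycleGraph 5).Adj 1 4) ((hpadj 1 4).mp h)
  have hn24 : ¬ G.Adj (p 2) (p 4) := fun h => (by decide : ¬ (cycleGraph 5).Adj 2 4) ((hpadj 2 4).mp h)
  have hn20 : ¬ G.Adj (p 2) (p 0) := fun h => hn02 h.symm
  have hn30 : ¬ G.Adj (p 3) (p 0) := fun h => hn03 h.symm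
  have hn31 : ¬ G.Adj (p 3) (p 1) := fun h => hn13 h.symm
  have hn41 : ¬ G.Adj (p 4) (p 1) := fun h => hn14 h.symm
  have hn42 : ¬ G.Adj (p 4) (p 2) := fun h => hn24 h.symm
  have hx0 : G.Adj (p 0) x := by rw [hp0]; exact hx.1
  have hx1 : G.Adj (p 1) x := by rw [hp1]; exact hx.2
  have hy0 : G.Adj (p 0) y := by rw [hp0]; exact hy.1
  have hy1 : G.Adj (p 1) y := by rw [hp1]; exact hy.2
  -- common neighbours of p 0, p 1 are not on the cycle
  have hnc : ∀ z, G.Adj (p 0) z → G.Adj (p 1) z → ∀ k, z ≠ p k := by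
    intro z h0 h1 k hzk
    rw [hzk] at h0 h1
    exact (by decide : ∀ k : Fin 5, ¬ ((cycleGraph 5).Adj 0 k ∧ (cycleGraph 5).Adj 1 k)) k
      ⟨(hpadj 0 k).mp h0, (hpadj 1 k).mp h1⟩
  have hxnp : ∀ k, x ≠ p k := hnc x hx0 hx1
  have hynp : ∀ k, y ≠ p k := hnc y hy0 hy1
  -- at least 7 vertices
  have h7 : 7 ≤ Fintype.card V := by
    have hcard : ({x, y, p 0, p 1, p 2, p 3, p 4} : Finset V).card = 7 := by
      rw [Finset.card_insert_of_notMem (by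
        simp only [Finset.mem_insert, Finset.mem_singleton]
        push_neg
        exact ⟨hxy, hxnp 0, hxnp 1, hxnp 2, hxnp 3, hxnp 4⟩),
        Finset.card_insert_of_notMem (by
        simp only [Finset.mem_insert, Finset.mem_singleton]
        push_neg
        exact ⟨hynp 0, hynp 1, hynp 2, hynp 3, hynp 4⟩),
        Finset.card_insert_of_notMem (by
        simp only [Finset.mem_insert, Finset.mem_singleton]
        push_neg
        exact ⟨fun h => (by decide : (0:Fin 5) ≠ 1) (hpinj h),
          fun h => (by decide : (0:Fin 5) ≠ 2) (hpinj h),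
          fun h => (by decide : (0:Fin 5) ≠ 3) (hpinj h),
          fun h => (by decide : (0:Fin 5) ≠ 4) (hpinj h)⟩),
        Finset.card_insert_of_notMem (by
        simp only [Finset.mem_insert, Finset.mem_singleton]
        push_neg
        exact ⟨fun h => (by decide : (1:Fin 5) ≠ 2) (hpinj h),
          fun h => (by decide : (1:Fin 5) ≠ 3) (hpinj h),
          fun h => (by decide : (1:Fin 5) ≠ 4) (hpinj h)⟩),
        Finset.card_insert_of_notMem (by
        simp only [Finset.mem_insert, Finset.mem_singleton]
        push_neg
        exact ⟨fun h => (by decide : (2:Fin 5) ≠ 3) (hpinj h),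
          fun h => (by decide : (2:Fin 5) ≠ 4) (hpinj h)⟩),
        Finset.card_insert_of_notMem (by
        simp only [Finset.mem_singleton]
        exact fun h => (by decide : (3:Fin 5) ≠ 4) (hpinj h)),
        Finset.card_singleton]
    have := Finset.card_le_univ ({x, y, p 0, p 1, p 2, p 3, p 4} : Finset V)
    rwa [hcard] at this
  -- first side branch: a common neighbour adjacent to p 2 yields a t-imperfect minor
  have side2 : ∀ z, G.Adj (p 0) z → G.Adj (p 1) z → (∀ k, z ≠ p k) →
      G.Adj z (p 2) → False := by
    intro z hz0 hz1 hzk hz2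
    have hz0' := hz0.symm
    have hz1' := hz1.symm
    have hz2' := hz2.symm
    have hinjbash : Function.Injective ![p 0, p 1, p 2, p 3, p 4, z] := by
      intro m m' h
      fin_cases m <;> fin_cases m' <;>
        first
          | rfl
          | exact absurd (hpinj h) (by decide)
          | exact ((hzk _) h.symm).elim
          | exact ((hzk _) h).elim
    by_cases h3 : G.Adj z (p 3) <;> by_cases h4 : G.Adj z (p 4)
    · have h3' := h3.symm
      have h4' := h4.symm
      refine key G hc.1 patW5 ![p 0, p 1, p 2, p 3, p 4, z] hinjbash ?_ (by omega) patW5_not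
      intro i' j' hij'
      fin_cases i' <;> fin_cases j' <;>
        first
          | exact absurd rfl hij'
          | exact iff_of_true (by assumption) (by decide)
          | exact iff_of_false (by assumption) (by decide)
    · have h3' := h3.symm
      have h4' : ¬ G.Adj (p 4) z := fun h => h4 h.symm
      refine key G hc.1 patA23 ![p 0, p 1, p 2, p 3, p 4, z] hinjbash ?_ (by omega) patA23_not
      intro i' j' hij'
      fin_cases i' <;> fin_cases j' <;>
        first
          | exact absurd rfl hij'
          | exact iff_of_true (by assumption) (by decide)
          | exact iff_of_false (by assumption) (by decide)
    · have h3' : ¬ G.Adj (p 3) z := fun h => h3 h.symm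
      have h4' := h4.symm
      refine key G hc.1 patA24 ![p 0, p 1, p 2, p 3, p 4, z] hinjbash ?_ (by omega) patA24_not
      intro i' j' hij'
      fin_cases i' <;> fin_cases j' <;>
        first
          | exact absurd rfl hij'
          | exact iff_of_true (by assumption) (by decide)
          | exact iff_of_false (by assumption) (by decide)
    · have h3' : ¬ G.Adj (p 3) z := fun h => h3 h.symm
      have h4' : ¬ G.Adj (p 4) z := fun h => h4 h.symm
      refine key G hc.1 patA2 ![p 0, p 1, p 2, p 3, p 4, z] hinjbash ?_ (by omega) patA2_not
      intro i' j' hij'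
      fin_cases i' <;> fin_cases j' <;>
        first
          | exact absurd rfl hij'
          | exact iff_of_true (by assumption) (by decide)
          | exact iff_of_false (by assumption) (by decide)
  -- mirror side branch: a common neighbour adjacent to p 4 (but not p 2)
  have side4 : ∀ z, G.Adj (p 0) z → G.Adj (p 1) z → (∀ k, z ≠ p k) →
      ¬ G.Adj z (p 2) → G.Adj z (p 4) → False := by
    intro z hz0 hz1 hzk hz2 hz4
    have hz0' := hz0.symm
    have hz1' := hz1.symm
    have hz4' := hz4.symm
    have hz2' : ¬ G.Adj (p 2) z := fun h => hz2 h.symm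
    have hinjbash : Function.Injective ![p 1, p 0, p 4, p 3, p 2, z] := by
      intro m m' h
      fin_cases m <;> fin_cases m' <;>
        first
          | rfl
          | exact absurd (hpinj h) (by decide)
          | exact ((hzk _) h.symm).elim
          | exact ((hzk _) h).elim
    by_cases h3 : G.Adj z (p 3)
    · have h3' := h3.symm
      refine key G hc.1 patA23 ![p 1, p 0, p 4, p 3, p 2, z] hinjbash ?_ (by omega) patA23_not
      intro i' j' hij'
      fin_cases i' <;> fin_cases j' <;>
        first
          | exact absurd rfl hij'
          | exact iff_of_true (by assumption) (by decide)
          | exact iff_of_false (by assumption) (by decide)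
    · have h3' : ¬ G.Adj (p 3) z := fun h => h3 h.symm
      refine key G hc.1 patA2 ![p 1, p 0, p 4, p 3, p 2, z] hinjbash ?_ (by omega) patA2_not
      intro i' j' hij'
      fin_cases i' <;> fin_cases j' <;>
        first
          | exact absurd rfl hij'
          | exact iff_of_true (by assumption) (by decide)
          | exact iff_of_false (by assumption) (by decide)
  by_cases hxyadj : G.Adj x y
  · -- K4 on {p 0, p 1, x, y}
    have hx0' := hx0.symm
    have hx1' := hx1.symm
    have hy0' := hy0.symm
    have hy1' := hy1.symm
    have hxyadj' := hxyadj.symm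
    refine key G hc.1 patK4 ![p 0, p 1, x, y] ?_ ?_ (by omega) patK4_not
    · intro m m' h
      fin_cases m <;> fin_cases m' <;>
        first
          | rfl
          | exact absurd (hpinj h) (by decide)
          | exact ((hxnp _) h.symm).elim
          | exact ((hxnp _) h).elim
          | exact ((hynp _) h.symm).elim
          | exact ((hynp _) h).elim
          | exact (hxy h).elim
          | exact (hxy h.symm).elim
    · intro i' j' hij'
      fin_cases i' <;> fin_cases j' <;>
        first
          | exact absurd rfl hij'
          | exact iff_of_true (by assumption) (by decide)
  · -- independent set {x, y, p 2, p 4} : K4 in the complement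
    have hnx2 : ¬ G.Adj x (p 2) := fun h => side2 x hx0 hx1 hxnp h
    have hnx4 : ¬ G.Adj x (p 4) := fun h => side4 x hx0 hx1 hxnp hnx2 h
    have hny2 : ¬ G.Adj y (p 2) := fun h => side2 y hy0 hy1 hynp h
    have hny4 : ¬ G.Adj y (p 4) := fun h => side4 y hy0 hy1 hynp hny2 h
    have c1 : Gᶜ.Adj x y := ⟨hxy, hxyadj⟩
    have c1' : Gᶜ.Adj y x := c1.symm
    have c2 : Gᶜ.Adj x (p 2) := ⟨hxnp 2, hnx2⟩
    have c2' : Gᶜ.Adj (p 2) x := c2.symm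
    have c3 : Gᶜ.Adj x (p 4) := ⟨hxnp 4, hnx4⟩
    have c3' : Gᶜ.Adj (p 4) x := c3.symm
    have c4 : Gᶜ.Adj y (p 2) := ⟨hynp 2, hny2⟩
    have c4' : Gᶜ.Adj (p 2) y := c4.symm
    have c5 : Gᶜ.Adj y (p 4) := ⟨hynp 4, hny4⟩
    have c5' : Gᶜ.Adj (p 4) y := c5.symm
    have c6 : Gᶜ.Adj (p 2) (p 4) := ⟨fun h => (by decide : (2:Fin 5) ≠ 4) (hpinj h), hn24⟩
    have c6' : Gᶜ.Adj (p 4) (p 2) := c6.symm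
    refine key Gᶜ hc.2 patK4 ![x, y, p 2, p 4] ?_ ?_ (by omega) patK4_not
    · intro m m' h
      fin_cases m <;> fin_cases m' <;>
        first
          | rfl
          | exact absurd (hpinj h) (by decide)
          | exact ((hxnp _) h.symm).elim
          | exact ((hxnp _) h).elim
          | exact ((hynp _) h.symm).elim
          | exact ((hynp _) h).elim
          | exact (hxy h).elim
          | exact (hxy h.symm).elim
    · intro i' j' hij'
      fin_cases i' <;> fin_cases j' <;>
        first
          | exact absurd rfl hij'
          | exact iff_of_true (by assumption) (by decide)


end TP
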